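/- arXiv:1304.4827 — 3 statements merged into one kernel-verified Lean document; each statement's English description precedes it below -/
import Mathlib

section
/- For any three points x, y, z on the round 2-sphere of radius 1/2, the sum of the pairwise geodesic distances satisfies d(x,y) + d(y,z) + d(z,x) ≤ π. -/
open Real

/-- Intrinsic (geodesic) distance on the round 2-sphere of radius `1/2` in `ℝ³`:
for `x, y` of norm `1/2`, `⟪x,y⟫ = (1/2)² cos θ` where `θ` is the angle between
them, and the geodesic distance is `(1/2) · θ`. -/
noncomputable def sphereHalfDist (x y : EuclideanSpace ℝ (Fin 3)) : ℝ :=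
  (1 / 2) * Real.arccos (4 * (inner ℝ x y : ℝ))

lemma arccos_anti {a b : ℝ} (_h₁ : -1 ≤ a) (h₂ : a ≤ b) :
    Real.arccos b ≤ Real.arccos a := by
  unfold Real.arccos
  have := Real.monotone_arcsin h₂
  linarith

/-- Spherical triangle inequality on unit vectors. -/
lemma arccos_inner_triangle (u v w : EuclideanSpace ℝ (Fin 3))
    (hu : ‖u‖ = 1) (hv : ‖v‖ = 1) (hw : ‖w‖ = 1) :
    Real.arccos (inner ℝ u w : ℝ) ≤
      Real.arccos (inner ℝ u v : ℝ) + Real.arccos (inner ℝ v w : ℝ) := by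
  set a : ℝ := inner ℝ u v with ha
  set b : ℝ := inner ℝ v w with hb
  set c : ℝ := inner ℝ u w with hc
  have habs : ∀ p q : EuclideanSpace ℝ (Fin 3), ‖p‖ = 1 → ‖q‖ = 1 →
      |(inner ℝ p q : ℝ)| ≤ 1 := by
    intro p q hp hq
    have := abs_real_inner_le_norm p q
    rw [hp, hq] at this; simpa using this
  have ha1 := habs u v hu hv
  have hb1 := habs v w hv hw
  have hc1 := habs u w hu hw
  rw [abs_le] at ha1 hb1 hc1
  set A := Real.arccos a
  set B := Real.arccos b
  by_cases hAB : A + B ≥ Real.pi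
  · linarith [Real.arccos_le_pi c]
  push_neg at hAB
  have hA0 := Real.arccos_nonneg a
  have hB0 := Real.arccos_nonneg b
  -- key inequality: cos (A + B) ≤ c
  have hcos : Real.cos (A + B) ≤ c := by
    have hcA : Real.cos A = a := Real.cos_arccos ha1.1 ha1.2
    have hcB : Real.cos B = b := Real.cos_arccos hb1.1 hb1.2
    have hsA : Real.sin A = Real.sqrt (1 - a ^ 2) := Real.sin_arccos a
    have hsB : Real.sin B = Real.sqrt (1 - b ^ 2) := Real.sin_arccos b
    rw [Real.cos_add, hcA, hcB, hsA, hsB]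
    -- Cauchy-Schwarz on u - a•v and w - b•v
    have key : |c - a * b| ≤ Real.sqrt (1 - a ^ 2) * Real.sqrt (1 - b ^ 2) := by
      have hvv : (inner ℝ v v : ℝ) = 1 := by
        rw [real_inner_self_eq_norm_sq, hv]; norm_num
      have hinner : (inner ℝ (u - a • v) (w - b • v) : ℝ) = c - a * b := by
        simp only [inner_sub_left, inner_sub_right, real_inner_smul_left,
          real_inner_smul_right, hvv, ← ha, ← hb, ← hc, mul_one]
        ring
      have hnu : ‖u - a • v‖ = Real.sqrt (1 - a ^ 2) := by
        have : ‖u - a • v‖ ^ 2 = 1 - a ^ 2 := by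
          rw [norm_sub_sq_real, real_inner_smul_right, norm_smul, hu, hv, ← ha]
          simp [sq_abs]
          ring
        rw [← this, Real.sqrt_sq (norm_nonneg _)]
      have hnw : ‖w - b • v‖ = Real.sqrt (1 - b ^ 2) := by
        have : ‖w - b • v‖ ^ 2 = 1 - b ^ 2 := by
          rw [norm_sub_sq_real, real_inner_smul_right, real_inner_comm v w,
            norm_smul, hw, hv, ← hb]
          simp [sq_abs]
          ring
        rw [← this, Real.sqrt_sq (norm_nonneg _)]
      calc |c - a * b| = |(inner ℝ (u - a • v) (w - b • v) : ℝ)| := by rw [hinner]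
        _ ≤ ‖u - a • v‖ * ‖w - b • v‖ := abs_real_inner_le_norm _ _
        _ = Real.sqrt (1 - a ^ 2) * Real.sqrt (1 - b ^ 2) := by rw [hnu, hnw]
    have := abs_le.mp key
    linarith [this.1]
  have := arccos_anti (Real.neg_one_le_cos (A + B)) hcos
  rw [Real.arccos_cos (by linarith) (le_of_lt hAB)] at this
  linarith

/-- For any three points on the round 2-sphere of radius `1/2`, the pairwise intrinsic
distances sum to at most `π`. -/
theorem sum_dist_le_pi_sphere_half (x y z : EuclideanSpace ℝ (Fin 3))
    (hx : ‖x‖ = 1 / 2) (hy : ‖y‖ = 1 / 2) (hz : ‖z‖ = 1 / 2) :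
    sphereHalfDist x y + sphereHalfDist y z + sphereHalfDist z x ≤ Real.pi := by
  set u := (2 : ℝ) • x with hu
  set v := (2 : ℝ) • y with hv
  set w := (2 : ℝ) • z with hw
  have hnu : ‖u‖ = 1 := by rw [hu, norm_smul]; simp [hx]
  have hnv : ‖v‖ = 1 := by rw [hv, norm_smul]; simp [hy]
  have hnw : ‖w‖ = 1 := by rw [hw, norm_smul]; simp [hz]
  have hiuv : (inner ℝ u v : ℝ) = 4 * (inner ℝ x y : ℝ) := by
    simp [hu, hv, inner_smul_left, inner_smul_right]; ring
  have hivw : (inner ℝ v w : ℝ) = 4 * (inner ℝ y z : ℝ) := by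
    simp [hv, hw, inner_smul_left, inner_smul_right]; ring
  have hiuw : (inner ℝ u w : ℝ) = 4 * (inner ℝ x z : ℝ) := by
    simp [hu, hw, inner_smul_left, inner_smul_right]; ring
  have hnegv : ‖-v‖ = 1 := by simpa using hnv
  have htri := arccos_inner_triangle u (-v) w hnu hnegv hnw
  rw [inner_neg_right, inner_neg_left, Real.arccos_neg, Real.arccos_neg] at htri
  have hzx : (inner ℝ z x : ℝ) = (inner ℝ x z : ℝ) := real_inner_comm x z
  unfold sphereHalfDist
  rw [hzx, ← hiuv, ← hivw, ← hiuw]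
  linarith
end

section
/- A finite abelian subgroup of U(2) that acts freely on the unit sphere S³ ⊂ ℂ² (i.e., no nontrivial element has 1 as an eigenvalue) is cyclic. -/
open Matrix

/-- A finite abelian subgroup of `U(2)` acting freely on the unit sphere `S³ ⊂ ℂ²`
(i.e. no nontrivial element has `1` as an eigenvalue) is cyclic. -/
theorem isCyclic_of_abelian_free_subgroup_U2
    (H : Subgroup (Matrix.unitaryGroup (Fin 2) ℂ)) [Finite H]
    (habel : ∀ a ∈ H, ∀ b ∈ H, a * b = b * a)
    (hfree : ∀ g ∈ H, g ≠ 1 → ∀ v : Fin 2 → ℂ, (g : Matrix (Fin 2) (Fin 2) ℂ) *ᵥ v = v → v = 0) :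
    IsCyclic H := by
  -- Step 1: find a common eigenvector `v ≠ 0` for all elements of `H`.
  obtain ⟨v, hv, hc⟩ : ∃ v : Fin 2 → ℂ, v ≠ 0 ∧
      ∀ h : H, ∃ c : ℂ, ((h : Matrix.unitaryGroup (Fin 2) ℂ) : Matrix (Fin 2) (Fin 2) ℂ) *ᵥ v
        = c • v := by
    by_cases hscal : ∀ h : H, ∃ c : ℂ,
        ((h : Matrix.unitaryGroup (Fin 2) ℂ) : Matrix (Fin 2) (Fin 2) ℂ) = c • (1 : Matrix (Fin 2) (Fin 2) ℂ)
    · refine ⟨![1, 0], ?_, fun h => ?_⟩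
      · intro h0
        have := congrFun h0 0
        simp at this
      · obtain ⟨c, hcs⟩ := hscal h
        exact ⟨c, by rw [hcs, smul_mulVec, one_mulVec]⟩
    · push_neg at hscal
      obtain ⟨g₀, hg₀⟩ := hscal
      set A : Matrix (Fin 2) (Fin 2) ℂ := ((g₀ : Matrix.unitaryGroup (Fin 2) ℂ) : Matrix (Fin 2) (Fin 2) ℂ)
      obtain ⟨μ, hμ⟩ := Module.End.exists_eigenvalue (Matrix.toLin' A)
      obtain ⟨w, hwE, hw0⟩ := hμ.exists_hasEigenvector
      have hwE' : w ∈ Module.End.eigenspace (Matrix.toLin' A) μ := hwE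
      -- the eigenspace equals the span of `w`
      have hspan : (ℂ ∙ w) = Module.End.eigenspace (Matrix.toLin' A) μ := by
        apply Submodule.eq_of_le_of_finrank_le
        · rwa [Submodule.span_singleton_le_iff_mem]
        · rw [finrank_span_singleton hw0]
          have hne : Module.End.eigenspace (Matrix.toLin' A) μ ≠ ⊤ := by
            intro htop
            apply hg₀ μ
            apply Matrix.toLin'.injective
            apply LinearMap.ext
            intro x
            have hx : x ∈ Module.End.eigenspace (Matrix.toLin' A) μ := htop ▸ Submodule.mem_top
            rw [Module.End.mem_eigenspace_iff] at hx
            simpa [Matrix.toLin'_apply, Matrix.smul_mulVec, Matrix.one_mulVec] using hx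
          have := Submodule.finrank_lt (K := ℂ) (V := Fin 2 → ℂ) hne
          simp only [Module.finrank_fin_fun] at this
          omega
      refine ⟨w, hw0, fun h => ?_⟩
      have hmem : ((h : Matrix.unitaryGroup (Fin 2) ℂ) : Matrix (Fin 2) (Fin 2) ℂ) *ᵥ w
          ∈ Module.End.eigenspace (Matrix.toLin' A) μ := by
        rw [Module.End.mem_eigenspace_iff]
        have hcomm : ((g₀ : Matrix.unitaryGroup (Fin 2) ℂ) * (h : Matrix.unitaryGroup (Fin 2) ℂ))
            = ((h : Matrix.unitaryGroup (Fin 2) ℂ) * (g₀ : Matrix.unitaryGroup (Fin 2) ℂ)) :=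
          habel _ g₀.2 _ h.2
        have hcommM : A * ((h : Matrix.unitaryGroup (Fin 2) ℂ) : Matrix (Fin 2) (Fin 2) ℂ)
            = ((h : Matrix.unitaryGroup (Fin 2) ℂ) : Matrix (Fin 2) (Fin 2) ℂ) * A := by
          simpa [A] using congrArg (fun u : Matrix.unitaryGroup (Fin 2) ℂ => (u : Matrix (Fin 2) (Fin 2) ℂ)) hcomm
        have hAw : A *ᵥ w = μ • w := by
          have := Module.End.mem_eigenspace_iff.mp hwE'
          simpa [Matrix.toLin'_apply] using this
        rw [Matrix.toLin'_apply, Matrix.mulVec_mulVec, hcommM, ← Matrix.mulVec_mulVec, hAw,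
          Matrix.mulVec_smul]
      rw [← hspan, Submodule.mem_span_singleton] at hmem
      obtain ⟨c, hc⟩ := hmem
      exact ⟨c, hc.symm⟩
  -- uniqueness of the eigenvalue
  obtain ⟨i, hi⟩ : ∃ i, v i ≠ 0 := by
    by_contra hall
    push_neg at hall
    exact hv (funext hall)
  have huniq : ∀ c c' : ℂ, c • v = c' • v → c = c' := by
    intro c c' hcc
    have := congrFun hcc i
    simp only [Pi.smul_apply, smul_eq_mul] at this
    exact mul_right_cancel₀ hi this
  -- Step 2: package the eigenvalue into a monoid hom `H →* ℂ`.
  have hspec : ∀ h : H, ((h : Matrix.unitaryGroup (Fin 2) ℂ) : Matrix (Fin 2) (Fin 2) ℂ) *ᵥ v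
      = (Classical.choose (hc h)) • v := fun h => Classical.choose_spec (hc h)
  let cf : H → ℂ := fun h => Classical.choose (hc h)
  let f : H →* ℂ :=
    { toFun := cf
      map_one' := by
        apply huniq
        rw [← hspec 1]
        simp
      map_mul' := by
        intro a b
        apply huniq
        rw [← hspec (a * b)]
        have : ((((a * b) : H) : Matrix.unitaryGroup (Fin 2) ℂ) : Matrix (Fin 2) (Fin 2) ℂ)
            = ((a : Matrix.unitaryGroup (Fin 2) ℂ) : Matrix (Fin 2) (Fin 2) ℂ)
              * ((b : Matrix.unitaryGroup (Fin 2) ℂ) : Matrix (Fin 2) (Fin 2) ℂ) := by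
          push_cast
          rfl
        rw [this, ← Matrix.mulVec_mulVec, hspec b, Matrix.mulVec_smul, hspec a, smul_smul]
        show (Classical.choose (hc b) * Classical.choose (hc a)) • v
          = (Classical.choose (hc a) * Classical.choose (hc b)) • v
        rw [mul_comm] }
  -- Step 3: `f` is injective by freeness of the action.
  have hinj : Function.Injective f := by
    intro a b hab
    have hva : ((a : Matrix.unitaryGroup (Fin 2) ℂ) : Matrix (Fin 2) (Fin 2) ℂ) *ᵥ v
        = ((b : Matrix.unitaryGroup (Fin 2) ℂ) : Matrix (Fin 2) (Fin 2) ℂ) *ᵥ v := by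
      rw [hspec a, hspec b]
      exact congrArg (· • v) hab
    set g : Matrix.unitaryGroup (Fin 2) ℂ := ((b⁻¹ * a : H) : Matrix.unitaryGroup (Fin 2) ℂ)
    have hgv : (g : Matrix (Fin 2) (Fin 2) ℂ) *ᵥ v = v := by
      have hg : (g : Matrix (Fin 2) (Fin 2) ℂ)
          = (star ((b : Matrix.unitaryGroup (Fin 2) ℂ) : Matrix (Fin 2) (Fin 2) ℂ))
            * ((a : Matrix.unitaryGroup (Fin 2) ℂ) : Matrix (Fin 2) (Fin 2) ℂ) := rfl
      rw [hg, ← Matrix.mulVec_mulVec, hva, Matrix.mulVec_mulVec,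
        Matrix.UnitaryGroup.star_mul_self, Matrix.one_mulVec]
    have hg1 : g = 1 := by
      by_contra hne
      exact hv (hfree g (b⁻¹ * a : H).2 hne v hgv)
    have : (b⁻¹ * a : H) = 1 := Subtype.ext hg1
    exact (inv_mul_eq_one.mp this).symm
  exact isCyclic_of_subgroup_isDomain f hinj
end

section
/- The binary icosahedral group is perfect, i.e., it equals its own commutator subgroup; equivalently its abelianization is trivial. -/
namespace BinIcosAux

open Matrix
open scoped commutatorElement

instance : Fact (Nat.Prime 5) := ⟨by norm_num⟩

abbrev G := Matrix.SpecialLinearGroup (Fin 2) (ZMod 5)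

def t (a : ZMod 5) : G := ⟨!![1, a; 0, 1], by simp [Matrix.det_fin_two_of]⟩
def l (a : ZMod 5) : G := ⟨!![1, 0; a, 1], by simp [Matrix.det_fin_two_of]⟩
def d : G := ⟨!![2, 0; 0, 3], by decide⟩

lemma comm_eq {g h k : G} (H : g * h = k * h * g) : ⁅g, h⁆ = k := by
  have : g * h * g⁻¹ * h⁻¹ = k := by
    rw [H]; group
  simpa [commutatorElement_def] using this

lemma l_mul (a b : ZMod 5) : l a * l b = l (a + b) := by
  apply Subtype.ext
  show (l a).1 * (l b).1 = (l (a+b)).1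
  ext i j
  fin_cases i <;> fin_cases j <;>
    simp [l, Matrix.mul_apply, Fin.sum_univ_two]

lemma t_mem (a : ZMod 5) : t a ∈ commutator G := by
  have key : ⁅d, t (2 * a)⁆ = t a := by
    apply comm_eq
    apply Subtype.ext
    show d.1 * (t (2*a)).1 = ((t a).1 * (t (2*a)).1) * d.1
    revert a; decide
  rw [← key, commutator_def]
  exact Subgroup.commutator_mem_commutator (Subgroup.mem_top _) (Subgroup.mem_top _)

lemma l_mem (a : ZMod 5) : l a ∈ commutator G := by
  have key : ⁅d, l (2 * a)⁆ = l a := by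
    apply comm_eq
    apply Subtype.ext
    show d.1 * (l (2*a)).1 = ((l a).1 * (l (2*a)).1) * d.1
    revert a; decide
  rw [← key, commutator_def]
  exact Subgroup.commutator_mem_commutator (Subgroup.mem_top _) (Subgroup.mem_top _)

lemma mem_of_ne_zero (g : G) (hc : g.1 1 0 ≠ 0) : g ∈ commutator G := by
  have hdet : g.1 0 0 * g.1 1 1 - g.1 0 1 * g.1 1 0 = 1 := by
    have := g.2
    rwa [Matrix.det_fin_two] at this
  have key : g = t ((g.1 0 0 - 1) / g.1 1 0) * l (g.1 1 0) *
      t ((g.1 1 1 - 1) / g.1 1 0) := by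
    apply Subtype.ext
    show g.1 = ((t _).1 * (l _).1) * (t _).1
    ext i j
    fin_cases i <;> fin_cases j <;>
      · simp [t, l, Matrix.mul_apply, Fin.sum_univ_two]
        try field_simp
        try ring_nf
        try linear_combination g.1 1 0 * hdet
        try linear_combination -hdet
  rw [key]
  exact Subgroup.mul_mem _ (Subgroup.mul_mem _ (t_mem _) (l_mem _)) (t_mem _)

lemma all_mem (g : G) : g ∈ commutator G := by
  by_cases hc : g.1 1 0 = 0
  · have hdet : g.1 0 0 * g.1 1 1 = 1 := by
      have := g.2
      rw [Matrix.det_fin_two, hc] at this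
      simpa using this
    have he : g.1 1 1 ≠ 0 := right_ne_zero_of_mul_eq_one hdet
    have hl : l (1:ZMod 5) * l (-1) = 1 := by
      rw [l_mul]
      exact Subtype.ext (by decide)
    have hg : g = (g * l 1) * l (-1) := by
      rw [mul_assoc, hl, mul_one]
    have hne : ((g * l 1)).1 1 0 ≠ 0 := by
      have e : ((g * l 1)).1 1 0 = g.1 1 1 := by
        show (g.1 * (l 1).1) 1 0 = _
        simp [l, Matrix.mul_apply, Fin.sum_univ_two, hc]
      rw [e]; exact he
    rw [hg]
    exact Subgroup.mul_mem _ (mem_of_ne_zero _ hne) (l_mem _)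
  · exact mem_of_ne_zero g hc

end BinIcosAux

/-- The binary icosahedral group, identified with `SL(2,5)`, is perfect: it equals its own
commutator subgroup (equivalently, its abelianization is trivial). -/
theorem binaryIcosahedral_perfect :
    commutator (Matrix.SpecialLinearGroup (Fin 2) (ZMod 5)) = ⊤ ∧
    Subsingleton (Abelianization (Matrix.SpecialLinearGroup (Fin 2) (ZMod 5))) := by
  constructor
  · rw [eq_top_iff]
    intro g _
    exact BinIcosAux.all_mem g
  · have h : commutator (Matrix.SpecialLinearGroup (Fin 2) (ZMod 5)) = ⊤ := by
      rw [eq_top_iff]; intro g _; exact BinIcosAux.all_mem g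
    unfold Abelianization
    rw [h]
    exact QuotientGroup.subsingleton_quotient_top
end
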